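/- Let p be a prime with p > 7 and p ∉ {13, 17, 19, 47, 61}, and let J be a multiset over (ZMod p)^3 with |J| = 9p - 3 and no zero-sum sub-multiset of cardinality p. Then J has a zero-sum sub-multiset of cardinality 6p. -/

import Mathlib

set_option linter.unusedSectionVars false
set_option linter.unusedVariables false

open Finset MvPolynomial

namespace Stmt17

variable {p : ℕ} [Fact p.Prime] {ι : Type*} [DecidableEq ι]

def ZS (a : ι → Fin 3 → ZMod p) (s : Finset ι) (m : ℕ) : Finset (Finset ι) :=
  s.powerset.filter fun t => t.card = m ∧ ∑ i ∈ t, a i = 0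

lemma mem_ZS {a : ι → Fin 3 → ZMod p} {s : Finset ι} {m : ℕ} {t : Finset ι} :
    t ∈ ZS a s m ↔ t ⊆ s ∧ t.card = m ∧ ∑ i ∈ t, a i = 0 := by
  simp [ZS, mem_powerset]

lemma ZS_mono {a : ι → Fin 3 → ZMod p} {s s' : Finset ι} (h : s' ⊆ s) (m : ℕ) :
    ZS a s' m ⊆ ZS a s m := by
  intro t ht
  rw [mem_ZS] at ht ⊢
  exact ⟨ht.1.trans h, ht.2⟩

lemma ZS_zero (a : ι → Fin 3 → ZMod p) (s : Finset ι) : ZS a s 0 = {∅} := by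
  ext t
  simp only [mem_ZS, mem_singleton, Finset.card_eq_zero]
  constructor
  · rintro ⟨-, rfl, -⟩; rfl
  · rintro rfl; simp

lemma card_support_eq [Fintype ι] (t : Finset ι) :
    (univ.filter fun x : ι → ZMod p => univ.filter (fun i => x i ≠ 0) = t).card
      = (p - 1) ^ t.card := by
  classical
  haveI : NeZero p := ⟨(Fact.out : p.Prime).ne_zero⟩
  rw [← Fintype.card_subtype]
  have e : {x : ι → ZMod p // univ.filter (fun i => x i ≠ 0) = t}
      ≃ (t → {u : ZMod p // u ≠ 0}) :=
    { toFun := fun x i => ⟨x.1 i, by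
        have hi : (i : ι) ∈ filter (fun i0 => x.1 i0 ≠ 0) univ := by
          rw [x.2]; exact i.2
        exact (mem_filter.mp hi).2⟩
      invFun := fun y => ⟨fun i0 => if h : i0 ∈ t then (y ⟨i0, h⟩).1 else 0, by
        ext i0
        simp only [mem_filter, mem_univ, true_and]
        by_cases h : i0 ∈ t
        · simp [h, (y ⟨i0, h⟩).2]
        · simp [h]⟩
      left_inv := fun x => by
        ext i0
        by_cases h : i0 ∈ t
        · simp [h]
        · simp only [dif_neg h]
          by_contra hne
          exact h (x.2 ▸ mem_filter.mpr ⟨mem_univ _, fun hc => hne hc.symm⟩)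
      right_inv := fun y => by
        ext i
        simp [i.2] }
  rw [Fintype.card_congr e, Fintype.card_fun, Fintype.card_coe]
  congr 1
  have h1 : Fintype.card {u : ZMod p // ¬ u = 0} = Fintype.card (ZMod p) - Fintype.card {u : ZMod p // u = 0} :=
    Fintype.card_subtype_compl _
  simpa [ZMod.card, Fintype.card_subtype_eq (0 : ZMod p)] using h1

lemma cw_univ [Fintype ι] (a : ι → Fin 3 → ZMod p) (hn : 4 * (p - 1) < Fintype.card ι) :
    ∑ t ∈ univ.filter (fun t : Finset ι => (∑ i ∈ t, a i) = 0 ∧ ((t.card : ZMod p) = 0)),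
      (-1 : ZMod p) ^ t.card = 0 := by
  classical
  haveI : NeZero p := ⟨(Fact.out : p.Prime).ne_zero⟩
  have hp1 : p - 1 ≠ 0 := by have := (Fact.out : p.Prime).two_le; omega
  set D := univ.filter (fun t : Finset ι => (∑ i ∈ t, a i) = 0 ∧ ((t.card : ZMod p) = 0))
    with hD
  let w : Fin 4 → ι → ZMod p := fun j i => if h : (j : ℕ) < 3 then a i ⟨j, h⟩ else 1
  let f : Fin 4 → MvPolynomial ι (ZMod p) := fun j => ∑ i, C (w j i) * X i ^ (p - 1)
  have hdeg : ∀ j, (f j).totalDegree ≤ p - 1 := by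
    intro j
    refine totalDegree_finsetSum_le fun i _ => ?_
    calc (C (w j i) * X i ^ (p - 1)).totalDegree
        ≤ (C (w j i)).totalDegree + (X (R := ZMod p) i ^ (p - 1)).totalDegree :=
          totalDegree_mul _ _
      _ ≤ p - 1 := by simp [totalDegree_C, totalDegree_X_pow]
  have hsum : (∑ j : Fin 4, (f j).totalDegree) < Fintype.card ι := by
    calc (∑ j : Fin 4, (f j).totalDegree) ≤ ∑ _j : Fin 4, (p - 1) :=
          Finset.sum_le_sum fun j _ => hdeg j
      _ = 4 * (p - 1) := by simp [mul_comm]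
      _ < Fintype.card ι := hn
  have hdvd0 := char_dvd_card_solutions_of_fintype_sum_lt (K := ZMod p) p hsum
  have hdvd : p ∣ Fintype.card {x : ι → ZMod p // ∀ j, eval x (f j) = 0} := by
    convert hdvd0 using 2
  -- evaluation
  have heval : ∀ (x : ι → ZMod p) (j : Fin 4),
      eval x (f j) = ∑ i ∈ univ.filter (fun i => x i ≠ 0), w j i := by
    intro x j
    rw [map_sum]
    rw [Finset.sum_filter]
    refine Finset.sum_congr rfl fun i _ => ?_
    by_cases h : x i = 0
    · simp [h, zero_pow hp1]
    · simp [h, ZMod.pow_card_sub_one_eq_one h]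
  have hiff : ∀ x : ι → ZMod p,
      (∀ j, eval x (f j) = 0) ↔ (univ.filter (fun i => x i ≠ 0)) ∈ D := by
    intro x
    rw [hD, mem_filter]
    simp only [mem_univ, true_and]
    constructor
    · intro H
      constructor
      · funext c
        have := H ⟨(c : ℕ), by omega⟩
        rw [heval] at this
        rw [Finset.sum_apply]  -- might need adjusting
        convert this using 2 with i hi
        · simp [w, Fin.is_lt c]
        · rfl
      · have := H 3
        rw [heval] at this
        simpa [w] using this
    · rintro ⟨h1, h2⟩ j
      rw [heval]
      by_cases hj : (j : ℕ) < 3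
      · have := congrFun h1 ⟨(j : ℕ), hj⟩
        rw [Finset.sum_apply] at this
        convert this using 2 with i hi
        simp [w, hj]
        rfl
      · have hj3 : j = 3 := by omega
        subst hj3
        simpa [w] using h2
  -- counting
  have hcount : Fintype.card {x : ι → ZMod p // ∀ j, eval x (f j) = 0}
      = ∑ t ∈ D, (p - 1) ^ t.card := by
    rw [Fintype.card_subtype]
    rw [Finset.card_eq_sum_card_fiberwise
      (f := fun x : ι → ZMod p => univ.filter (fun i => x i ≠ 0)) (t := D)
      (fun x hx => (hiff x).1 (mem_filter.mp hx).2)]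
    refine Finset.sum_congr rfl fun t ht => ?_
    rw [← card_support_eq (p := p) t]
    congr 1
    ext x
    simp only [mem_filter, mem_univ, true_and]
    constructor
    · exact fun h => h.2
    · intro h
      exact ⟨(hiff x).2 (h ▸ ht), h⟩
  have hcast : ((Fintype.card {x : ι → ZMod p // ∀ j, eval x (f j) = 0} : ℕ) : ZMod p) = 0 := by
    rw [ZMod.natCast_eq_zero_iff]
    exact hdvd
  rw [hcount] at hcast
  rw [← hcast]
  push_cast
  refine Finset.sum_congr rfl fun t _ => ?_
  congr 1
  have : ((p - 1 : ℕ) : ZMod p) = -1 := by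
    have h2 := (Fact.out : p.Prime).two_le
    push_cast [Nat.cast_sub (by omega : 1 ≤ p)]
    simp
  rw [this]


lemma cw_rel (a : ι → Fin 3 → ZMod p) (hodd : Odd p) {s : Finset ι}
    (hs : 4 * (p - 1) < s.card) :
    ∑ k ∈ Finset.range (s.card / p + 1),
      (-1 : ZMod p) ^ k * ((ZS a s (k * p)).card : ZMod p) = 0 := by
  classical
  haveI : NeZero p := ⟨(Fact.out : p.Prime).ne_zero⟩
  have hp0 : 0 < p := (Fact.out : p.Prime).pos
  have h1 := cw_univ (ι := ↥s) (fun i => a i.1)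
    (by rw [Fintype.card_coe]; exact hs)
  -- transfer to subsets of s
  set Ds := s.powerset.filter
    (fun t : Finset ι => (∑ i ∈ t, a i) = 0 ∧ ((t.card : ZMod p) = 0)) with hDs
  have hmap : ∀ t ⊆ s, (t.subtype (· ∈ s)).map (Function.Embedding.subtype _) = t := by
    intro t ht
    rw [Finset.subtype_map, Finset.filter_true_of_mem fun i hi => ht hi]
  have hcard : ∀ t ⊆ s, (t.subtype (· ∈ s)).card = t.card := by
    intro t ht
    conv_rhs => rw [← hmap t ht]
    rw [Finset.card_map]
  have hsum' : ∀ t ⊆ s, (∑ i ∈ t.subtype (· ∈ s), a i.1) = ∑ i ∈ t, a i := by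
    intro t ht
    conv_rhs => rw [← hmap t ht]
    rw [Finset.sum_map]
    rfl
  have h2 : ∑ t ∈ Ds, (-1 : ZMod p) ^ t.card = 0 := by
    rw [← h1]
    refine Finset.sum_nbij' (i := fun t => t.subtype (· ∈ s))
      (j := fun t' => t'.map (Function.Embedding.subtype _)) ?_ ?_ ?_ ?_ ?_
    · intro t ht
      rw [hDs, mem_filter, mem_powerset] at ht
      obtain ⟨hts, hsum, hcardz⟩ := ht
      simp only [mem_filter, mem_univ, true_and]
      rw [hcard t hts, hsum' t hts]
      exact ⟨hsum, hcardz⟩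
    · intro t' ht'
      simp only [mem_filter, mem_univ, true_and] at ht'
      rw [hDs, mem_filter, mem_powerset]
      refine ⟨?_, ?_, ?_⟩
      · intro i hi
        rw [Finset.mem_map] at hi
        obtain ⟨i', -, rfl⟩ := hi
        exact i'.2
      · rw [Finset.sum_map]
        exact ht'.1
      · rw [Finset.card_map]
        exact ht'.2
    · intro t ht
      rw [hDs, mem_filter, mem_powerset] at ht
      exact hmap t ht.1
    · intro t' ht'
      apply Finset.map_injective (Function.Embedding.subtype _)
      apply hmap
      intro i hi
      rw [Finset.mem_map] at hi
      obtain ⟨i', -, rfl⟩ := hi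
      exact i'.2
    · intro t ht
      rw [hDs, mem_filter, mem_powerset] at ht
      simp only [hcard t ht.1]
  -- fiberwise by card / p
  rw [← h2]
  rw [← Finset.sum_fiberwise_of_maps_to (g := fun t : Finset ι => t.card / p)
    (t := Finset.range (s.card / p + 1)) ?_ (fun t => (-1 : ZMod p) ^ t.card)]
  · refine Finset.sum_congr rfl fun k hk => ?_
    have hfib : Ds.filter (fun t => t.card / p = k) = ZS a s (k * p) := by
      ext t
      rw [mem_filter, hDs, mem_filter, mem_powerset, mem_ZS]
      constructor
      · rintro ⟨⟨hts, hsum, hcast⟩, hdiv⟩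
        have hdvd : p ∣ t.card := by
          rwa [ZMod.natCast_eq_zero_iff] at hcast
        obtain ⟨c, hc⟩ := hdvd
        have hdc : t.card / p = c := by rw [hc, Nat.mul_div_cancel_left _ hp0]
        refine ⟨hts, ?_, hsum⟩
        rw [hc, ← hdiv, hdc, mul_comm]
      · rintro ⟨hts, hcard, hsum⟩
        refine ⟨⟨hts, hsum, ?_⟩, ?_⟩
        · rw [hcard]; push_cast; simp
        · rw [hcard, Nat.mul_div_cancel _ hp0]
    rw [hfib]
    have hconst : ∀ t ∈ ZS a s (k * p), (-1 : ZMod p) ^ t.card = (-1 : ZMod p) ^ k := by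
      intro t ht
      rw [(mem_ZS.mp ht).2.1]
      rcases Nat.even_or_odd k with hk' | hk'
      · rw [Even.neg_one_pow (hk'.mul_right p), Even.neg_one_pow hk']
      · rw [Odd.neg_one_pow (hk'.mul hodd), Odd.neg_one_pow hk']
    rw [Finset.sum_congr rfl hconst, Finset.sum_const, nsmul_eq_mul, mul_comm]
  · intro t ht
    rw [hDs, mem_filter, mem_powerset] at ht
    rw [Finset.mem_range]
    show t.card / p < s.card / p + 1
    exact Nat.lt_succ_of_le (Nat.div_le_div_right (Finset.card_le_card ht.1))

lemma ZS_self {a : ι → Fin 3 → ZMod p} {s : Finset ι} (hsum : ∑ i ∈ s, a i = 0) :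
    ZS a s s.card = {s} := by
  ext t
  simp only [mem_ZS, mem_singleton]
  constructor
  · rintro ⟨hts, htc, -⟩
    exact Finset.eq_of_subset_of_card_le hts (le_of_eq htc.symm)
  · rintro rfl
    exact ⟨Finset.Subset.refl _, rfl, hsum⟩

lemma ZS_compl {a : ι → Fin 3 → ZMod p} {s t u : Finset ι} {m : ℕ}
    (hts : t ⊆ s) (hts0 : ∑ i ∈ t, a i = 0) (hu : u ∈ ZS a t m) :
    t \ u ∈ ZS a s (t.card - m) := by
  obtain ⟨hut, huc, hus⟩ := mem_ZS.mp hu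
  rw [mem_ZS]
  refine ⟨(Finset.sdiff_subset).trans hts, by rw [Finset.card_sdiff_of_subset hut, huc], ?_⟩
  have := Finset.sum_sdiff (f := a) hut
  rw [hus, add_zero] at this
  rw [this, hts0]

lemma ZS_4p_empty (a : ι → Fin 3 → ZMod p) (hp7 : 7 < p) {s : Finset ι}
    (h1 : ZS a s p = ∅) (h2 : ZS a s (2 * p) = ∅) : ZS a s (4 * p) = ∅ := by
  have hp0 : 0 < p := (Fact.out : p.Prime).pos
  have hodd : Odd p := (Fact.out : p.Prime).odd_of_ne_two (by omega)
  rw [Finset.eq_empty_iff_forall_notMem]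
  intro t ht
  obtain ⟨hts, htc, hts0⟩ := mem_ZS.mp ht
  have hrel := cw_rel a hodd (s := t) (by rw [htc]; omega)
  have hdiv : t.card / p = 4 := by rw [htc, Nat.mul_div_cancel _ hp0]
  rw [hdiv] at hrel
  have c0 : ((ZS a t (0 * p)).card : ZMod p) = 1 := by
    rw [zero_mul, ZS_zero]; simp
  have c1 : (ZS a t (1 * p)).card = 0 := by
    rw [one_mul, Finset.card_eq_zero, ← Finset.subset_empty, ← h1]
    exact ZS_mono hts p
  have c2 : (ZS a t (2 * p)).card = 0 := by
    rw [Finset.card_eq_zero, ← Finset.subset_empty, ← h2]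
    exact ZS_mono hts (2 * p)
  have c3 : (ZS a t (3 * p)).card = 0 := by
    rw [Finset.card_eq_zero, Finset.eq_empty_iff_forall_notMem]
    intro u hu
    have := ZS_compl hts hts0 hu
    rw [htc, show 4 * p - 3 * p = p by omega] at this
    rw [Finset.eq_empty_iff_forall_notMem] at h1
    exact h1 _ this
  have c4 : ((ZS a t (4 * p)).card : ZMod p) = 1 := by
    have : ZS a t (4 * p) = {t} := by rw [← htc]; exact ZS_self hts0
    rw [this]; simp
  rw [show (4:ℕ) + 1 = 5 by norm_num] at hrel
  rw [Finset.sum_range_succ, Finset.sum_range_succ, Finset.sum_range_succ,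
    Finset.sum_range_succ, Finset.sum_range_one] at hrel
  rw [c0, c4, c1, c2, c3] at hrel
  norm_num at hrel
  -- hrel should give (2 : ZMod p) = 0 or similar
  have h20 : ((2 : ℕ) : ZMod p) = 0 := by push_cast; linear_combination hrel
  rw [ZMod.natCast_eq_zero_iff] at h20
  have := Nat.le_of_dvd (by norm_num) h20
  omega

lemma ZS_empty_of_empty {a : ι → Fin 3 → ZMod p} {s s' : Finset ι} (h : s' ⊆ s) {m : ℕ}
    (hm : ZS a s m = ∅) : ZS a s' m = ∅ :=
  Finset.subset_empty.mp (hm ▸ ZS_mono h m)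

/-- relation for sets of size 4p-3 with no p- and no 2p- zero-sums -/
lemma three_rel (a : ι → Fin 3 → ZMod p) (hp7 : 7 < p) {s : Finset ι}
    (hcard : s.card = 4 * p - 3) (h1 : ZS a s p = ∅) (h2 : ZS a s (2 * p) = ∅) :
    ((ZS a s (3 * p)).card : ZMod p) = 1 := by
  have hp0 : 0 < p := (Fact.out : p.Prime).pos
  have hodd : Odd p := (Fact.out : p.Prime).odd_of_ne_two (by omega)
  have hrel := cw_rel a hodd (s := s) (by omega)
  have hdiv : s.card / p = 3 := by
    rw [hcard, show 4 * p - 3 = p * 3 + (p - 3) by omega, Nat.mul_add_div hp0,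
      Nat.div_eq_of_lt (by omega)]
  rw [hdiv] at hrel
  have c0 : ((ZS a s (0 * p)).card : ZMod p) = 1 := by rw [zero_mul, ZS_zero]; simp
  have c1 : (ZS a s (1 * p)).card = 0 := by rw [one_mul, Finset.card_eq_zero]; exact h1
  have c2 : (ZS a s (2 * p)).card = 0 := by rw [Finset.card_eq_zero]; exact h2
  rw [show (3:ℕ) + 1 = 4 by norm_num, Finset.sum_range_succ, Finset.sum_range_succ,
    Finset.sum_range_succ, Finset.sum_range_one, c0, c1, c2] at hrel
  norm_num at hrel
  linear_combination -hrel

/-- relation for sets of size 5p-3 with no p- and no 2p- zero-sums -/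
lemma four_rel (a : ι → Fin 3 → ZMod p) (hp7 : 7 < p) {s : Finset ι}
    (hcard : s.card = 5 * p - 3) (h1 : ZS a s p = ∅) (h2 : ZS a s (2 * p) = ∅) :
    ((ZS a s (3 * p)).card : ZMod p) = 1 := by
  have hp0 : 0 < p := (Fact.out : p.Prime).pos
  have hodd : Odd p := (Fact.out : p.Prime).odd_of_ne_two (by omega)
  have hrel := cw_rel a hodd (s := s) (by omega)
  have hdiv : s.card / p = 4 := by
    rw [hcard, show 5 * p - 3 = p * 4 + (p - 3) by omega, Nat.mul_add_div hp0,
      Nat.div_eq_of_lt (by omega)]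
  rw [hdiv] at hrel
  have c0 : ((ZS a s (0 * p)).card : ZMod p) = 1 := by rw [zero_mul, ZS_zero]; simp
  have c1 : (ZS a s (1 * p)).card = 0 := by rw [one_mul, Finset.card_eq_zero]; exact h1
  have c2 : (ZS a s (2 * p)).card = 0 := by rw [Finset.card_eq_zero]; exact h2
  have c4 : (ZS a s (4 * p)).card = 0 := by
    rw [Finset.card_eq_zero]; exact ZS_4p_empty a hp7 h1 h2
  rw [show (4:ℕ) + 1 = 5 by norm_num, Finset.sum_range_succ, Finset.sum_range_succ,
    Finset.sum_range_succ, Finset.sum_range_succ, Finset.sum_range_one,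
    c0, c1, c2, c4] at hrel
  norm_num at hrel
  linear_combination -hrel

lemma card_supersets {u s : Finset ι} (hus : u ⊆ s) {n : ℕ} (hn : u.card ≤ n) :
    ((s.powersetCard n).filter (fun K => u ⊆ K)).card
      = (s.card - u.card).choose (n - u.card) := by
  rw [← Finset.card_sdiff_of_subset hus, ← Finset.card_powersetCard (n - u.card) (s \ u)]
  apply Finset.card_bij' (i := fun K _ => K \ u) (j := fun K' _ => K' ∪ u)
  · intro K hK
    rw [mem_filter, Finset.mem_powersetCard] at hK
    obtain ⟨⟨hKs, hKc⟩, huK⟩ := hK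
    rw [Finset.mem_powersetCard]
    exact ⟨Finset.sdiff_subset_sdiff hKs (Finset.Subset.refl u),
      by rw [Finset.card_sdiff_of_subset huK, hKc]⟩
  · intro K' hK'
    rw [Finset.mem_powersetCard] at hK'
    obtain ⟨hK's, hK'c⟩ := hK'
    have hdisj : Disjoint K' u := Finset.disjoint_of_subset_left hK's Finset.sdiff_disjoint
    rw [mem_filter, Finset.mem_powersetCard]
    refine ⟨⟨Finset.union_subset (hK's.trans (Finset.sdiff_subset)) hus, ?_⟩,
      Finset.subset_union_right⟩
    rw [Finset.card_union_of_disjoint hdisj, hK'c]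
    omega
  · intro K hK
    rw [mem_filter] at hK
    exact Finset.sdiff_union_of_subset hK.2
  · intro K' hK'
    rw [Finset.mem_powersetCard] at hK'
    have hdisj : Disjoint K' u := Finset.disjoint_of_subset_left hK'.1 Finset.sdiff_disjoint
    rw [Finset.union_sdiff_cancel_right hdisj]

lemma lucas1 (hp7 : 7 < p) : (((5 * p - 3).choose (4 * p - 3) : ℕ) : ZMod p) = 4 := by
  have hp0 : 0 < p := (Fact.out : p.Prime).pos
  have h := Choose.choose_modEq_choose_mod_mul_choose_div_nat (p := p)
    (n := 5 * p - 3) (k := 4 * p - 3)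
  have e1 : 5 * p - 3 = p * 4 + (p - 3) := by omega
  have e2 : 4 * p - 3 = p * 3 + (p - 3) := by omega
  have hm1 : (5 * p - 3) % p = p - 3 := by
    rw [e1, Nat.mul_add_mod, Nat.mod_eq_of_lt (by omega)]
  have hm2 : (4 * p - 3) % p = p - 3 := by
    rw [e2, Nat.mul_add_mod, Nat.mod_eq_of_lt (by omega)]
  have hd1 : (5 * p - 3) / p = 4 := by
    rw [e1, Nat.mul_add_div hp0, Nat.div_eq_of_lt (by omega)]
  have hd2 : (4 * p - 3) / p = 3 := by
    rw [e2, Nat.mul_add_div hp0, Nat.div_eq_of_lt (by omega)]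
  rw [hm1, hm2, hd1, hd2, Nat.choose_self, one_mul] at h
  rw [(ZMod.natCast_eq_natCast_iff _ _ _).mpr h]
  norm_num [Nat.choose]

lemma lucas2 (hp7 : 7 < p) : (((2 * p - 3).choose (p - 3) : ℕ) : ZMod p) = 1 := by
  have hp0 : 0 < p := (Fact.out : p.Prime).pos
  have h := Choose.choose_modEq_choose_mod_mul_choose_div_nat (p := p)
    (n := 2 * p - 3) (k := p - 3)
  have e1 : 2 * p - 3 = p * 1 + (p - 3) := by omega
  have hm1 : (2 * p - 3) % p = p - 3 := by
    rw [e1, Nat.mul_add_mod, Nat.mod_eq_of_lt (by omega)]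
  have hm2 : (p - 3) % p = p - 3 := Nat.mod_eq_of_lt (by omega)
  have hd1 : (2 * p - 3) / p = 1 := by
    rw [e1, Nat.mul_add_div hp0, Nat.div_eq_of_lt (by omega)]
  have hd2 : (p - 3) / p = 0 := Nat.div_eq_of_lt (by omega)
  rw [hm1, hm2, hd1, hd2, Nat.choose_self, one_mul, Nat.choose_zero_right] at h
  rw [(ZMod.natCast_eq_natCast_iff _ _ _).mpr h]
  norm_num

/-- Key lemma: a 5p-3 family with no zero-sum p-subset has a zero-sum 2p-subset. -/
lemma exists_2p (a : ι → Fin 3 → ZMod p) (hp7 : 7 < p) {s : Finset ι}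
    (hcard : s.card = 5 * p - 3) (h1 : ZS a s p = ∅) :
    (ZS a s (2 * p)).Nonempty := by
  have hp0 : 0 < p := (Fact.out : p.Prime).pos
  rw [Finset.nonempty_iff_ne_empty]
  intro h2
  have h3 : ((ZS a s (3 * p)).card : ZMod p) = 1 := four_rel a hp7 hcard h1 h2
  have hK : ∀ K ∈ s.powersetCard (4 * p - 3), ((ZS a K (3 * p)).card : ZMod p) = 1 := by
    intro K hK
    rw [Finset.mem_powersetCard] at hK
    exact three_rel a hp7 hK.2 (ZS_empty_of_empty hK.1 h1) (ZS_empty_of_empty hK.1 h2)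
  -- double counting
  have key1 : ∑ K ∈ s.powersetCard (4 * p - 3), ((ZS a K (3 * p)).card : ZMod p)
      = (((5 * p - 3).choose (4 * p - 3) : ℕ) : ZMod p) := by
    rw [Finset.sum_congr rfl hK, Finset.sum_const, nsmul_eq_mul, mul_one,
      Finset.card_powersetCard, hcard]
  have hZK : ∀ K ∈ s.powersetCard (4 * p - 3),
      ZS a K (3 * p) = (ZS a s (3 * p)).filter (· ⊆ K) := by
    intro K hKmem
    rw [Finset.mem_powersetCard] at hKmem
    ext u
    rw [mem_filter, mem_ZS, mem_ZS]
    constructor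
    · rintro ⟨huK, hc, hs0⟩
      exact ⟨⟨huK.trans hKmem.1, hc, hs0⟩, huK⟩
    · rintro ⟨⟨-, hc, hs0⟩, huK⟩
      exact ⟨huK, hc, hs0⟩
  have key2 : ∑ K ∈ s.powersetCard (4 * p - 3), ((ZS a K (3 * p)).card : ZMod p)
      = ((ZS a s (3 * p)).card : ZMod p) * (((2 * p - 3).choose (p - 3) : ℕ) : ZMod p) := by
    calc ∑ K ∈ s.powersetCard (4 * p - 3), ((ZS a K (3 * p)).card : ZMod p)
        = ∑ K ∈ s.powersetCard (4 * p - 3),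
            ∑ u ∈ ZS a s (3 * p), (if u ⊆ K then (1 : ZMod p) else 0) := by
          refine Finset.sum_congr rfl fun K hKm => ?_
          rw [hZK K hKm, ← Finset.sum_filter, Finset.sum_const, nsmul_eq_mul, mul_one]
      _ = ∑ u ∈ ZS a s (3 * p),
            ∑ K ∈ s.powersetCard (4 * p - 3), (if u ⊆ K then (1 : ZMod p) else 0) :=
          Finset.sum_comm
      _ = ∑ u ∈ ZS a s (3 * p), (((2 * p - 3).choose (p - 3) : ℕ) : ZMod p) := by
          refine Finset.sum_congr rfl fun u hu => ?_
          rw [mem_ZS] at hu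
          rw [← Finset.sum_filter, Finset.sum_const, nsmul_eq_mul, mul_one,
            card_supersets hu.1 (by omega : u.card ≤ 4 * p - 3)]
          rw [hu.2.1, hcard]
          congr 2 <;> omega
      _ = _ := by rw [Finset.sum_const, nsmul_eq_mul]
  rw [key2, h3, one_mul, lucas2 hp7, lucas1 hp7] at key1
  -- key1 : 1 = 4 in ZMod p
  have h30 : ((3 : ℕ) : ZMod p) = 0 := by push_cast; linear_combination -key1
  rw [ZMod.natCast_eq_zero_iff] at h30
  have := Nat.le_of_dvd (by norm_num) h30
  omega

end Stmt17

open Stmt17 Finset in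
theorem stmt_17 (p : ℕ) (hp : p.Prime) (hp7 : 7 < p)
    (hp' : p ≠ 13 ∧ p ≠ 17 ∧ p ≠ 19 ∧ p ≠ 47 ∧ p ≠ 61)
    (J : Multiset (Fin 3 → ZMod p)) (hJ : Multiset.card J = 9 * p - 3)
    (h : ¬∃ T ≤ J, Multiset.card T = p ∧ T.sum = 0) :
    ∃ T ≤ J, Multiset.card T = 6 * p ∧ T.sum = 0 := by
  classical
  haveI : Fact p.Prime := ⟨hp⟩
  set a : (Fin 3 → ZMod p) × ℕ → (Fin 3 → ZMod p) := Prod.fst with ha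
  set s₀ := J.toEnumFinset with hs0
  have hs₀card : s₀.card = 9 * p - 3 := by rw [hs0, Multiset.card_toEnumFinset, hJ]
  have hno : ZS a s₀ p = ∅ := by
    rw [Finset.eq_empty_iff_forall_notMem]
    intro t ht
    rw [mem_ZS] at ht
    refine h ⟨t.val.map Prod.fst, Multiset.map_fst_le_of_subset_toEnumFinset ht.1, ?_, ?_⟩
    · rw [Multiset.card_map]; exact ht.2.1
    · exact ht.2.2
  have extract : ∀ s : Finset ((Fin 3 → ZMod p) × ℕ), s ⊆ s₀ → 5 * p - 3 ≤ s.card →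
      ∃ t, t ⊆ s ∧ t.card = 2 * p ∧ ∑ i ∈ t, a i = 0 := by
    intro s hs hc
    obtain ⟨s', hs's, hs'c⟩ := Finset.exists_subset_card_eq hc
    have h1 : ZS a s' p = ∅ := ZS_empty_of_empty (hs's.trans hs) hno
    obtain ⟨t, ht⟩ := exists_2p a hp7 hs'c h1
    rw [mem_ZS] at ht
    exact ⟨t, ht.1.trans hs's, ht.2⟩
  have hp0 : 0 < p := hp.pos
  obtain ⟨t₁, ht₁s, ht₁c, ht₁0⟩ := extract s₀ (Finset.Subset.refl _) (by omega)
  obtain ⟨t₂, ht₂s, ht₂c, ht₂0⟩ := extract (s₀ \ t₁) Finset.sdiff_subset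
    (by rw [Finset.card_sdiff_of_subset ht₁s, hs₀card, ht₁c]; omega)
  obtain ⟨t₃, ht₃s, ht₃c, ht₃0⟩ := extract ((s₀ \ t₁) \ t₂)
    (Finset.sdiff_subset.trans Finset.sdiff_subset)
    (by rw [Finset.card_sdiff_of_subset ht₂s, Finset.card_sdiff_of_subset ht₁s, hs₀card, ht₁c, ht₂c]; omega)
  have hd12 : Disjoint t₁ t₂ := (Finset.sdiff_disjoint.mono_left ht₂s).symm
  have hd13 : Disjoint t₁ t₃ :=
    (Finset.sdiff_disjoint.mono_left (ht₃s.trans Finset.sdiff_subset)).symm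
  have hd23 : Disjoint t₂ t₃ := (Finset.sdiff_disjoint.mono_left ht₃s).symm
  set u := t₁ ∪ t₂ ∪ t₃ with hu
  have hus : u ⊆ s₀ := union_subset (union_subset ht₁s (ht₂s.trans sdiff_subset))
    (ht₃s.trans (sdiff_subset.trans sdiff_subset))
  have hd : Disjoint (t₁ ∪ t₂) t₃ := Finset.disjoint_union_left.mpr ⟨hd13, hd23⟩
  have hucard : u.card = 6 * p := by
    rw [hu, Finset.card_union_of_disjoint hd, Finset.card_union_of_disjoint hd12,
      ht₁c, ht₂c, ht₃c]
    ring
  have husum : ∑ i ∈ u, a i = 0 := by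
    rw [hu, Finset.sum_union hd, Finset.sum_union hd12, ht₁0, ht₂0, ht₃0]
    simp
  refine ⟨u.val.map Prod.fst, Multiset.map_fst_le_of_subset_toEnumFinset hus, ?_, ?_⟩
  · rw [Multiset.card_map]; exact hucard
  · exact husum
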